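/- If G = G_1 ⊕ ⋯ ⊕ G_s is a finite abelian group with exp(G_i) = n ≥ 2 for all i ∈ [1, s], then (1/n)·[1, (n−1)s] ⊆ w(G), i.e. for every integer j with 1 ≤ j ≤ (n−1)s there exists a non-trivial zero-sum free sequence over G with cross number j/n. -/

import Mathlib

open Multiset Pointwise

/-- Cross number of a sequence (multiset) over an additive group. -/
noncomputable def crossNum {G : Type*} [AddCommGroup G] (S : Multiset G) : ℚ :=
  (S.map (fun g => (1 : ℚ) / (addOrderOf g : ℚ))).sum

/-- A sequence is zero-sum free if no non-empty subsequence sums to zero. -/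
def IsZeroSumFree {G : Type*} [AddCommGroup G] (S : Multiset G) : Prop :=
  ∀ T : Multiset G, T ≤ S → T ≠ 0 → T.sum ≠ (0 : G)

/-- A minimal zero-sum sequence: non-trivial, sum zero, no proper non-trivial
zero-sum subsequence. -/
def IsMinZeroSum {G : Type*} [AddCommGroup G] (S : Multiset G) : Prop :=
  S ≠ 0 ∧ S.sum = 0 ∧ ∀ T : Multiset G, T < S → T ≠ 0 → T.sum ≠ (0 : G)

/-- `wSet G` : set of cross numbers of non-trivial zero-sum free sequences over `G`. -/
def wSet (G : Type*) [AddCommGroup G] : Set ℚ :=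
  { k | ∃ S : Multiset G, S ≠ 0 ∧ IsZeroSumFree S ∧ crossNum S = k }

/-- `WSet G` : set of cross numbers of minimal zero-sum sequences over `G`. -/
def WSet (G : Type*) [AddCommGroup G] : Set ℚ :=
  { k | ∃ S : Multiset G, IsMinZeroSum S ∧ crossNum S = k }

lemma exists_parts (m : ℕ) : ∀ (s j : ℕ), j ≤ m * s →
    ∃ a : Fin s → ℕ, (∀ i, a i ≤ m) ∧ ∑ i, a i = j := by
  intro s
  induction s with
  | zero => intro j hj; simp at hj; exact ⟨fun i => 0, by simp, by simp [hj]⟩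
  | succ s ih =>
    intro j hj
    have hms : m * (s+1) = m * s + m := by ring
    have h1 : j - min m j ≤ m * s := by omega
    obtain ⟨a, ha, hsum⟩ := ih (j - min m j) h1
    refine ⟨Fin.cons (min m j) a, ?_, ?_⟩
    · intro i
      refine Fin.cases ?_ ?_ i
      · simp
      · intro k; simpa using ha k
    · rw [Fin.sum_cons, hsum]; omega

lemma crossNum_add {G : Type*} [AddCommGroup G] (A B : Multiset G) :
    crossNum (A + B) = crossNum A + crossNum B := by
  simp [crossNum]

lemma crossNum_replicate {G : Type*} [AddCommGroup G] (k : ℕ) (g : G) :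
    crossNum (Multiset.replicate k g) = k * (1 / (addOrderOf g : ℚ)) := by
  simp [crossNum, Multiset.map_replicate, Multiset.sum_replicate, nsmul_eq_mul]

lemma crossNum_finsum {G : Type*} [AddCommGroup G] {ι : Type*} (t : Finset ι)
    (M : ι → Multiset G) : crossNum (∑ i ∈ t, M i) = ∑ i ∈ t, crossNum (M i) := by
  classical
  induction t using Finset.induction with
  | empty => simp [crossNum]
  | insert _ _ h ih => rw [Finset.sum_insert h, Finset.sum_insert h, crossNum_add, ih]

theorem stmt3 (s : ℕ) (hs : 1 ≤ s) (G : Fin s → Type*)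
    [∀ i, AddCommGroup (G i)] [∀ i, Fintype (G i)]
    (n : ℕ) (hn : 2 ≤ n) (hexp : ∀ i, AddMonoid.exponent (G i) = n) :
    ∀ j : ℕ, 1 ≤ j → j ≤ (n - 1) * s → ((j : ℚ) / n) ∈ wSet (∀ i, G i) := by
  classical
  intro j hj1 hj2
  -- choose elements of order n
  have hg : ∀ i, ∃ g : G i, addOrderOf g = n := by
    intro i
    obtain ⟨g, hg⟩ := AddMonoid.exists_addOrderOf_eq_exponent
      (G := G i) (AddMonoid.ExponentExists.of_finite)
    exact ⟨g, by rw [hg, hexp]⟩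
  choose g hgord using hg
  set e : Fin s → (∀ i, G i) := fun i => Pi.single i (g i) with he
  have heord : ∀ i, addOrderOf (e i) = n := by
    intro i
    have := addOrderOf_injective (AddMonoidHom.single G i)
      (Pi.single_injective i) (g i)
    rw [he]; simpa [hgord i] using this
  have hgne : ∀ i, g i ≠ 0 := by
    intro i h
    have := hgord i; rw [h, addOrderOf_zero] at this; omega
  have heinj : Function.Injective e := by
    intro i k h
    by_contra hik
    have : e i i = e k i := by rw [h]
    rw [he] at this
    simp only [Pi.single_eq_same] at this
    rw [Pi.single_eq_of_ne hik] at this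
    exact hgne i this
  obtain ⟨a, ham, hasum⟩ := exists_parts (n - 1) s j hj2
  set S : Multiset (∀ i, G i) := ∑ i, Multiset.replicate (a i) (e i) with hS
  have hcount : ∀ i, S.count (e i) = a i := by
    intro i
    rw [hS, Multiset.count_sum']
    rw [Finset.sum_eq_single i]
    · simp [Multiset.count_replicate]
    · intro k _ hk
      rw [Multiset.count_replicate]
      exact if_neg (fun h => hk (heinj h))
    · simp
  -- every member of S is some e k
  have hmem : ∀ x ∈ S, ∃ k, x = e k := by
    intro x hx
    rw [hS, Multiset.mem_sum] at hx
    obtain ⟨k, _, hk⟩ := hx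
    exact ⟨k, Multiset.eq_of_mem_replicate hk⟩
  -- key evaluation lemma
  have heval : ∀ (i : Fin s) (T : Multiset (∀ i, G i)), (∀ x ∈ T, ∃ k, x = e k) →
      (T.map (fun f => f i)).sum = (T.count (e i)) • g i := by
    intro i T
    induction T using Multiset.induction with
    | empty => simp
    | cons x t ih =>
      intro hT
      obtain ⟨k, hk⟩ := hT x (Multiset.mem_cons_self x t)
      have ht' : ∀ y ∈ t, ∃ k, y = e k := fun y hy => hT y (Multiset.mem_cons_of_mem hy)
      rw [Multiset.map_cons, Multiset.sum_cons, ih ht', Multiset.count_cons]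
      by_cases hki : k = i
      · subst hki; subst hk
        rw [if_pos rfl]
        have : e k k = g k := by rw [he]; simp
        rw [this, succ_nsmul]
        abel
      · subst hk
        have hne : e i ≠ e k := fun h => hki (heinj h).symm
        rw [if_neg hne]
        have h0 : e k i = 0 := by rw [he]; exact Pi.single_eq_of_ne (fun h => hki h.symm) _
        rw [h0, zero_add, add_zero]
  refine ⟨S, ?_, ?_, ?_⟩
  · -- S ≠ 0
    have : ∃ i, a i ≠ 0 := by
      by_contra h
      push_neg at h
      rw [Finset.sum_congr rfl (fun i _ => h i)] at hasum
      simp at hasum; omega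
    obtain ⟨i, hi⟩ := this
    intro h0
    have := hcount i
    rw [h0] at this
    simp at this
    exact hi this.symm
  · -- zero-sum free
    intro T hTS hT0 hTsum
    obtain ⟨x, hx⟩ := Multiset.exists_mem_of_ne_zero hT0
    have hmemT : ∀ y ∈ T, ∃ k, y = e k := fun y hy => hmem y (Multiset.mem_of_le hTS hy)
    obtain ⟨i, hi⟩ := hmemT x hx
    subst hi
    have hb1 : 1 ≤ T.count (e i) := Multiset.count_pos.mpr hx
    have hb2 : T.count (e i) ≤ a i := by
      have := Multiset.count_le_of_le (e i) hTS
      rw [hcount i] at this; exact this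
    have hTi : T.sum i = 0 := by rw [hTsum]; rfl
    have : (T.map (fun f => f i)).sum = T.sum i := by
      simpa using ((Pi.evalAddMonoidHom G i).map_multiset_sum T).symm
    rw [heval i T hmemT, hTi] at this
    have hdvd : addOrderOf (g i) ∣ T.count (e i) :=
      addOrderOf_dvd_of_nsmul_eq_zero this
    rw [hgord i] at hdvd
    have h3 := Nat.le_of_dvd (by omega) hdvd
    have h4 := ham i
    omega
  · -- cross number
    rw [hS, crossNum_finsum]
    have : ∀ i : Fin s, crossNum (Multiset.replicate (a i) (e i)) = (a i : ℚ) * (1 / n) := by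
      intro i
      rw [crossNum_replicate, heord i]
    rw [Finset.sum_congr rfl (fun i _ => this i), ← Finset.sum_mul]
    rw [← Nat.cast_sum, hasum]
    ring
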